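/- arXiv:1404.6321 — 4 statements merged into one kernel-verified Lean document; each statement's English description precedes it below -/
import Mathlib

section
/- (Bohlin–Sundman duality) Suppose w : ℝ → ℂ satisfies the Hooke equation w'' = -(k̃/m̃)·w and w(t) ≠ 0 for all t. Let τ : ℝ → ℝ satisfy τ' (t) = |w(t)|² and let z be defined by z(τ(t)) = w(t)². Then z satisfies the Kepler equation d²z/dτ² = -(C̃/m̃)·z/|z|³, where C̃ = 2·(m̃·|w'(0)|² + k̃·|w(0)|²). -/
open Complex

lemma norm_sq_eq_mul_conj (u : ℂ) : ((‖u‖ ^ 2 : ℝ) : ℂ) = u * (starRingEnd ℂ) u := by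
  rw [Complex.mul_conj]
  norm_cast
  rw [Complex.normSq_eq_norm_sq]

/-- Bohlin–Sundman duality: if `w` solves Hooke's equation
`w'' = -(k̃/m̃)·w`, is nowhere zero, `τ' = |w|²`, `τ(0) = 0`, and `z(τ(t)) = w(t)²`,
then `z` solves the Kepler equation `z'' = -(C̃/m̃)·z/|z|³` along the curve, where
`C̃ = 2(m̃·|w'(0)|² + k̃·|w(0)|²)`. -/
theorem stmt_2 (m k : ℝ) (hm : 0 < m) (hk : 0 < k)
    (w w' w'' : ℝ → ℂ)
    (hw : ∀ t, HasDerivAt w (w' t) t)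
    (hw' : ∀ t, HasDerivAt w' (w'' t) t)
    (heq : ∀ t, w'' t = -((k / m : ℝ) : ℂ) * w t)
    (hw0 : ∀ t, w t ≠ 0)
    (τ : ℝ → ℝ)
    (hτ : ∀ t, HasDerivAt τ (‖w t‖ ^ 2) t) (hτ0 : τ 0 = 0)
    (z z' z'' : ℝ → ℂ)
    (hz : ∀ s, HasDerivAt z (z' s) s)
    (hz' : ∀ s, HasDerivAt z' (z'' s) s)
    (hzw : ∀ t, z (τ t) = (w t) ^ 2)
    (C : ℝ) (hC : C = 2 * (m * ‖w' 0‖ ^ 2 + k * ‖w 0‖ ^ 2)) :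
    ∀ t, z'' (τ t) = -((C / m : ℝ) : ℂ) * z (τ t) / ((‖z (τ t)‖ ^ 3 : ℝ) : ℂ) := by
  have hm' : (m : ℂ) ≠ 0 := by exact_mod_cast hm.ne'
  set N : ℝ → ℂ := fun t => w t * (starRingEnd ℂ) (w t) with hN
  have hNne : ∀ t, N t ≠ 0 := fun t =>
    mul_ne_zero (hw0 t) (star_ne_zero.mpr (hw0 t))
  have hNcast : ∀ t, ((‖w t‖ ^ 2 : ℝ) : ℂ) = N t := fun t => norm_sq_eq_mul_conj (w t)
  have hNd : ∀ t, HasDerivAt N (w' t * (starRingEnd ℂ) (w t) + w t * (starRingEnd ℂ) (w' t)) t :=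
    fun t => (hw t).mul (hw t).star
  -- energy conservation
  set g : ℝ → ℂ := fun t =>
    (m : ℂ) * (w' t * (starRingEnd ℂ) (w' t)) + (k : ℂ) * (w t * (starRingEnd ℂ) (w t)) with hg
  have hgd : ∀ t, HasDerivAt g 0 t := by
    intro t
    have h1 : HasDerivAt g
        ((m : ℂ) * (w'' t * (starRingEnd ℂ) (w' t) + w' t * (starRingEnd ℂ) (w'' t)) +
         (k : ℂ) * (w' t * (starRingEnd ℂ) (w t) + w t * (starRingEnd ℂ) (w' t))) t :=
      (((hw' t).mul (hw' t).star).const_mul _).add (((hw t).mul (hw t).star).const_mul _)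
    convert h1 using 1
    rw [heq t]
    simp only [map_mul, map_neg, Complex.conj_ofReal]
    push_cast
    field_simp
    ring
  have hgconst : ∀ t, g t = g 0 := by
    intro t
    exact is_const_of_deriv_eq_zero (fun x => (hgd x).differentiableAt)
      (fun x => (hgd x).deriv) t 0
  have hE : ∀ t, (C : ℂ) = 2 * ((m : ℂ) * (w' t * (starRingEnd ℂ) (w' t)) +
      (k : ℂ) * (w t * (starRingEnd ℂ) (w t))) := by
    intro t
    have h0 : ((C : ℝ) : ℂ) = 2 * g 0 := by
      rw [hC]
      push_cast
      rw [hg]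
      rw [show ((‖w' 0‖ : ℝ) : ℂ) ^ 2 = w' 0 * (starRingEnd ℂ) (w' 0) by
        exact_mod_cast norm_sq_eq_mul_conj (w' 0)]
      rw [show ((‖w 0‖ : ℝ) : ℂ) ^ 2 = w 0 * (starRingEnd ℂ) (w 0) by
        exact_mod_cast norm_sq_eq_mul_conj (w 0)]
    rw [h0, ← hgconst t]
  -- first derivative relation
  have hA : ∀ s, z' (τ s) = (2 * w s * w' s) * (N s)⁻¹ := by
    intro t
    have hcomp : HasDerivAt (fun s => z (τ s)) ((‖w t‖ ^ 2 : ℝ) • z' (τ t)) t :=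
      HasDerivAt.scomp t (hz (τ t)) (hτ t)
    have hcomp2 : HasDerivAt (fun s => (w s) ^ 2) ((‖w t‖ ^ 2 : ℝ) • z' (τ t)) t :=
      hcomp.congr_of_eventuallyEq (Filter.Eventually.of_forall fun s => (hzw s).symm)
    have hpow : HasDerivAt (fun s => w s ^ 2) (w' t * w t + w t * w' t) t := by
      exact ((hw t).mul (hw t)).congr_of_eventuallyEq (Filter.Eventually.of_forall fun s => pow_two (w s))
    have hu := hcomp2.unique hpow
    rw [real_smul, hNcast] at hu
    field_simp [hNne t] at hu ⊢
    linear_combination hu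
  -- second derivative relation
  intro t
  have hcomp : HasDerivAt (fun s => z' (τ s)) ((‖w t‖ ^ 2 : ℝ) • z'' (τ t)) t :=
    HasDerivAt.scomp t (hz' (τ t)) (hτ t)
  have hF : HasDerivAt (fun s => (2 * w s * w' s) * (N s)⁻¹)
      ((2 * w' t * w' t + 2 * w t * w'' t) * (N t)⁻¹ +
        (2 * w t * w' t) *
          (-(w' t * (starRingEnd ℂ) (w t) + w t * (starRingEnd ℂ) (w' t)) / (N t) ^ 2)) t := by
    have hinv := HasDerivAt.scomp t (hasDerivAt_inv (hNne t)) (hNd t)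
    have := (((hw t).const_mul (2 : ℂ)).mul (hw' t)).mul hinv
    exact this.congr_deriv (by simp only [smul_eq_mul, Function.comp_apply, Pi.mul_apply]; ring)
  have hcomp2 : HasDerivAt (fun s => (2 * w s * w' s) * (N s)⁻¹)
      ((‖w t‖ ^ 2 : ℝ) • z'' (τ t)) t :=
    hcomp.congr_of_eventuallyEq (Filter.Eventually.of_forall fun s => (hA s).symm)
  have key := hcomp2.unique hF
  rw [real_smul, hNcast] at key
  rw [heq t] at key
  push_cast at key
  -- cast facts
  have hz3 : ((‖z (τ t)‖ ^ 3 : ℝ) : ℂ) = (N t) ^ 3 := by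
    rw [hzw t]
    have h2 : ((‖w t‖ : ℝ) : ℂ) ^ 2 = N t := by exact_mod_cast hNcast t
    push_cast [norm_pow]
    rw [← h2]
  have hNe := hNne t
  field_simp at key
  have key2 : (m : ℂ) * (N t) ^ 3 * z'' (τ t) = -(C : ℂ) * (w t) ^ 2 := by
    apply mul_left_cancel₀ hNe
    linear_combination (N t) * key + (w t) ^ 3 * (starRingEnd ℂ) (w t) * hE t
  rw [hz3, hzw t, show ((C / m : ℝ) : ℂ) = (C : ℂ) / (m : ℂ) by push_cast; ring]
  field_simp
  linear_combination key2
end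

section
/- If z : ℝ → ℂ is nowhere zero and satisfies the Kepler equation z'' = -(C̃/m̃)·z/|z|³ with m̃ > 0, then the Kepler energy E_K = (m̃/2)·|z'|² - C̃/|z| is constant in time. -/
private lemma norm_eq_sqrt' (w : ℂ) : ‖w‖ = Real.sqrt (w.re ^ 2 + w.im ^ 2) := by
  rw [Complex.norm_def, Complex.normSq_apply]
  congr 1; ring

/-- For a nowhere-vanishing solution of the Kepler equation
`z'' = -(C̃/m̃)·z/|z|³` with `m̃ > 0`, the Kepler energy
`E_K = (m̃/2)·|z'|² - C̃/|z|` is constant in time. -/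
theorem stmt_4 (m C : ℝ) (hm : 0 < m)
    (z z' z'' : ℝ → ℂ)
    (hz : ∀ τ, HasDerivAt z (z' τ) τ)
    (hz' : ∀ τ, HasDerivAt z' (z'' τ) τ)
    (hz0 : ∀ τ, z τ ≠ 0)
    (heq : ∀ τ, z'' τ = -((C / m : ℝ) : ℂ) * z τ / ((‖z τ‖ ^ 3 : ℝ) : ℂ))
    (E : ℝ → ℝ)
    (hE : ∀ τ, E τ = (m / 2) * ‖z' τ‖ ^ 2 - C / ‖z τ‖) :
    ∀ τ σ : ℝ, E τ = E σ := by
  have hr0 : ∀ τ, (0:ℝ) < ‖z τ‖ := fun τ => norm_pos_iff.mpr (hz0 τ)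
  -- component derivatives
  have hx : ∀ τ, HasDerivAt (fun t => (z t).re) ((z' τ).re) τ := fun τ =>
    Complex.reCLM.hasFDerivAt.comp_hasDerivAt τ (hz τ)
  have hy : ∀ τ, HasDerivAt (fun t => (z t).im) ((z' τ).im) τ := fun τ =>
    Complex.imCLM.hasFDerivAt.comp_hasDerivAt τ (hz τ)
  have hx' : ∀ τ, HasDerivAt (fun t => (z' t).re) ((z'' τ).re) τ := fun τ =>
    Complex.reCLM.hasFDerivAt.comp_hasDerivAt τ (hz' τ)
  have hy' : ∀ τ, HasDerivAt (fun t => (z' t).im) ((z'' τ).im) τ := fun τ =>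
    Complex.imCLM.hasFDerivAt.comp_hasDerivAt τ (hz' τ)
  have hq : ∀ τ, HasDerivAt (fun t => (z t).re ^ 2 + (z t).im ^ 2)
      (2 * ((z τ).re * (z' τ).re + (z τ).im * (z' τ).im)) τ := fun τ => by
    have := ((hx τ).pow 2).add ((hy τ).pow 2)
    refine this.congr_deriv ?_; ring
  have hq0 : ∀ τ, (z τ).re ^ 2 + (z τ).im ^ 2 ≠ 0 := fun τ => by
    have := hr0 τ
    rw [norm_eq_sqrt'] at this
    intro h; rw [h, Real.sqrt_zero] at this; exact lt_irrefl 0 this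
  have hqnn : ∀ τ, (0:ℝ) ≤ (z τ).re ^ 2 + (z τ).im ^ 2 := fun τ => by positivity
  -- derivative of the norm
  have hr : ∀ τ, HasDerivAt (fun t => ‖z t‖)
      (((z τ).re * (z' τ).re + (z τ).im * (z' τ).im) / ‖z τ‖) τ := fun τ => by
    have hs := (Real.hasDerivAt_sqrt (hq0 τ)).comp τ (hq τ)
    simp only [norm_eq_sqrt']
    refine hs.congr_deriv ?_
    have hsq : Real.sqrt ((z τ).re ^ 2 + (z τ).im ^ 2) ≠ 0 := by
      rw [← norm_eq_sqrt']; exact (hr0 τ).ne'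
    field_simp
  -- E as an explicit function
  have hEf : E = fun t => (m / 2) * ((z' t).re ^ 2 + (z' t).im ^ 2) - C / ‖z t‖ := by
    funext t
    rw [hE t, norm_eq_sqrt' (z' t), Real.sq_sqrt (by positivity)]
  -- second-derivative components
  have hcomp : ∀ τ, (z'' τ).re = (-(C/m) / ‖z τ‖ ^ 3) * (z τ).re ∧
      (z'' τ).im = (-(C/m) / ‖z τ‖ ^ 3) * (z τ).im := fun τ => by
    have : z'' τ = ((-(C/m) / ‖z τ‖ ^ 3 : ℝ) : ℂ) * z τ := by
      rw [heq τ]; push_cast; ring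
    rw [this]
    exact ⟨Complex.re_ofReal_mul _ _, Complex.im_ofReal_mul _ _⟩
  -- E has derivative 0 everywhere
  have hE0 : ∀ τ, HasDerivAt E 0 τ := fun τ => by
    rw [hEf]
    have h1 : HasDerivAt (fun t => (m / 2) * ((z' t).re ^ 2 + (z' t).im ^ 2))
        ((m / 2) * (2 * ((z' τ).re * (z'' τ).re + (z' τ).im * (z'' τ).im))) τ := by
      have := (((hx' τ).pow 2).add ((hy' τ).pow 2)).const_mul (m / 2)
      refine this.congr_deriv ?_; ring
    have h2 : HasDerivAt (fun t => C / ‖z t‖)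
        (C * (-((((z τ).re * (z' τ).re + (z τ).im * (z' τ).im) / ‖z τ‖)) / ‖z τ‖ ^ 2)) τ := by
      have := ((hr τ).inv (hr0 τ).ne').const_mul C
      simpa [div_eq_mul_inv] using this
    have h3 := h1.sub h2
    refine h3.congr_deriv ?_
    obtain ⟨hre, him⟩ := hcomp τ
    have hr' : (‖z τ‖ : ℝ) ≠ 0 := (hr0 τ).ne'
    have hm' : m ≠ 0 := hm.ne'
    have hmm : m * m⁻¹ = 1 := mul_inv_cancel₀ hm'
    have hre' : m * (z'' τ).re = -C / ‖z τ‖ ^ 3 * (z τ).re := by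
      rw [hre]; linear_combination (-C * (z τ).re / ‖z τ‖ ^ 3) * hmm
    have him' : m * (z'' τ).im = -C / ‖z τ‖ ^ 3 * (z τ).im := by
      rw [him]; linear_combination (-C * (z τ).im / ‖z τ‖ ^ 3) * hmm
    linear_combination (z' τ).re * hre' + (z' τ).im * him'
  intro τ σ
  exact is_const_of_deriv_eq_zero (fun t => (hE0 t).differentiableAt)
    (fun t => (hE0 t).deriv) τ σ
end

section
/- For the dual Kepler motion obtained from a harmonic oscillator via the Bohlin–Sundman transformation, the Kepler energy satisfies E_K = -2·k̃: if w'' = -(k̃/m̃)·w, C̃ = 2·(m̃·|ẇ(0)|² + k̃·|w(0)|²), and z(τ(t)) = w(t)² with τ'=|w|², then (m̃/2)·|z'|² - C̃/|z| = -2·k̃ at every time. -/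
/-- Derivative of the squared norm of a complex-valued curve. -/
lemma normsq_hasDerivAt {v v' : ℝ → ℂ} {t : ℝ} (hv : HasDerivAt v (v' t) t) :
    HasDerivAt (fun t => ‖v t‖ ^ 2)
      (2 * ((v t).re * (v' t).re + (v t).im * (v' t).im)) t := by
  have hre : HasDerivAt (fun t => (v t).re) ((v' t).re) t :=
    (Complex.reCLM.hasFDerivAt.comp_hasDerivAt t hv)
  have him : HasDerivAt (fun t => (v t).im) ((v' t).im) t :=
    (Complex.imCLM.hasFDerivAt.comp_hasDerivAt t hv)
  have h : HasDerivAt (fun t => (v t).re ^ 2 + (v t).im ^ 2)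
      (2 * ((v t).re * (v' t).re + (v t).im * (v' t).im)) t := by
    have := (hre.pow 2).add (him.pow 2)
    refine this.congr_deriv ?_
    push_cast
    ring
  have hfun : (fun t => ‖v t‖ ^ 2) = fun t => (v t).re ^ 2 + (v t).im ^ 2 := by
    funext s
    rw [Complex.sq_norm, Complex.normSq_apply]
    ring
  rw [hfun]
  exact h

/-- for the dual Kepler motion obtained via the Bohlin–Sundman
transformation from an oscillator `w'' = -(k̃/m̃)·w`, with
`C̃ = 2(m̃·|ẇ(0)|² + k̃·|w(0)|²)`, the Kepler energy satisfies
`(m̃/2)·|z'|² - C̃/|z| = -2·k̃` at every time. -/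
theorem stmt_5 (m k : ℝ) (hm : 0 < m) (hk : 0 < k)
    (w w' w'' : ℝ → ℂ)
    (hw : ∀ t, HasDerivAt w (w' t) t)
    (hw' : ∀ t, HasDerivAt w' (w'' t) t)
    (heq : ∀ t, w'' t = -((k / m : ℝ) : ℂ) * w t)
    (hw0 : ∀ t, w t ≠ 0)
    (τ : ℝ → ℝ)
    (hτ : ∀ t, HasDerivAt τ (‖w t‖ ^ 2) t)
    (z z' : ℝ → ℂ)
    (hz : ∀ s, HasDerivAt z (z' s) s)
    (hzw : ∀ t, z (τ t) = (w t) ^ 2)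
    (C : ℝ) (hC : C = 2 * (m * ‖w' 0‖ ^ 2 + k * ‖w 0‖ ^ 2)) :
    ∀ t, (m / 2) * ‖z' (τ t)‖ ^ 2 - C / ‖z (τ t)‖ = -2 * k := by
  intro t
  -- Energy conservation: E t = E 0
  set E : ℝ → ℝ := fun t => m * ‖w' t‖ ^ 2 + k * ‖w t‖ ^ 2 with hE
  have hEderiv : ∀ s, HasDerivAt E 0 s := by
    intro s
    have h1 := normsq_hasDerivAt (hw s)
    have h2 := normsq_hasDerivAt (hw' s)
    have h := (h2.const_mul m).add (h1.const_mul k)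
    have hre : (w'' s).re = -(k / m) * (w s).re := by
      rw [heq s]; simp
    have him : (w'' s).im = -(k / m) * (w s).im := by
      rw [heq s]; simp
    refine h.congr_deriv ?_
    rw [hre, him]
    field_simp
    ring
  have hEconst : E t = E 0 := by
    apply is_const_of_deriv_eq_zero
    · exact fun s => (hEderiv s).differentiableAt
    · exact fun s => (hEderiv s).deriv
  -- chain rule : identify z' (τ t)
  have hchain : HasDerivAt (fun u => z (τ u)) ((‖w t‖ ^ 2) • z' (τ t)) t :=
    (hz (τ t)).scomp t (hτ t)
  have hsq : HasDerivAt (fun u => z (τ u)) (w' t * w t + w t * w' t) t := by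
    have : (fun u => z (τ u)) = fun u => w u * w u := by
      funext u; rw [hzw u]; ring
    rw [this]
    exact (hw t).mul (hw t)
  have huniq : (‖w t‖ ^ 2 : ℝ) • z' (τ t) = w' t * w t + w t * w' t :=
    hchain.unique hsq
  have hwn : ‖w t‖ ≠ 0 := norm_ne_zero_iff.mpr (hw0 t)
  have hwn2 : (‖w t‖ ^ 2 : ℝ) ≠ 0 := pow_ne_zero 2 hwn
  have hz' : z' (τ t) = (‖w t‖ ^ 2 : ℝ)⁻¹ • (w' t * w t + w t * w' t) := by
    rw [← huniq, smul_smul, inv_mul_cancel₀ hwn2, one_smul]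
  have hnz' : ‖z' (τ t)‖ = (‖w t‖ ^ 2)⁻¹ * (2 * (‖w' t‖ * ‖w t‖)) := by
    have h2 : w' t * w t + w t * w' t = (2 : ℂ) * (w' t * w t) := by ring
    rw [hz', h2, norm_smul, norm_mul, norm_mul, norm_inv, Real.norm_eq_abs,
      abs_of_nonneg (sq_nonneg _)]
    simp [Complex.norm_ofNat]
  have hnzτ : ‖z (τ t)‖ = ‖w t‖ ^ 2 := by
    rw [hzw t, norm_pow]
  -- final computation
  have hCt : C = 2 * (m * ‖w' t‖ ^ 2 + k * ‖w t‖ ^ 2) := by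
    rw [hC]; congr 1; exact hEconst.symm
  rw [hnz', hnzτ, hCt]
  set a := ‖w t‖ with ha
  set b := ‖w' t‖ with hb
  field_simp
  ring
end

section
/- If x : ℝ → ℝ³ satisfies m̃·ẍ = -(C̃/|x|³)·x with x nowhere zero, then the Laplace–Runge–Lenz vector A = m̃·ẋ × L - m̃·C̃·x/|x|, where L = m̃·(x × ẋ), is constant in time. -/
/-- Cross product on Euclidean 3-space. -/
noncomputable def cross3 (u v : EuclideanSpace ℝ (Fin 3)) : EuclideanSpace ℝ (Fin 3) :=
  WithLp.toLp 2 (crossProduct (u : Fin 3 → ℝ) (v : Fin 3 → ℝ))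

local notation "E3" => EuclideanSpace ℝ (Fin 3)

noncomputable def crossL : E3 →ₗ[ℝ] E3 →L[ℝ] E3 where
  toFun u := LinearMap.toContinuousLinearMap
    { toFun := fun v => cross3 u v
      map_add' := fun a b => by simp [cross3, map_add]
      map_smul' := fun c a => by simp [cross3, map_smul] }
  map_add' a b := by
    ext v
    simp [cross3, LinearMap.map_add, LinearMap.add_apply]

  map_smul' c a := by
    ext v
    simp [cross3]


noncomputable def crossCLM : E3 →L[ℝ] E3 →L[ℝ] E3 :=
  LinearMap.toContinuousLinearMap crossL

lemma crossCLM_apply (u v : E3) : crossCLM u v = cross3 u v := rfl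

lemma HasDerivAt.cross {u v : ℝ → E3} {u' v' : E3} {t : ℝ}
    (hu : HasDerivAt u u' t) (hv : HasDerivAt v v' t) :
    HasDerivAt (fun s => cross3 (u s) (v s)) (cross3 u' (v t) + cross3 (u t) v') t := by
  have h1 : HasDerivAt (fun s => crossCLM (u s)) (crossCLM u') t :=
    (crossCLM.hasFDerivAt.comp_hasDerivAt t hu)
  have := h1.clm_apply hv
  simpa [crossCLM_apply] using this

lemma cross3_self (a : E3) : cross3 a a = 0 := by
  simp [cross3, cross_self]

lemma cross3_smul_right (c : ℝ) (a b : E3) : cross3 a (c • b) = c • cross3 a b := by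
  simp [cross3, map_smul]

lemma cross3_smul_left (c : ℝ) (a b : E3) : cross3 (c • a) b = c • cross3 a b := by
  simp [cross3, map_smul]

lemma cross_cross_self (a b : E3) :
    cross3 a (cross3 a b) = (inner ℝ a b : ℝ) • a - (inner ℝ a a : ℝ) • b := by
  ext i
  fin_cases i <;>
    simp [cross3, cross_apply, PiLp.inner_apply, Fin.sum_univ_three, PiLp.sub_apply,
      PiLp.smul_apply, smul_eq_mul, RCLike.inner_apply, conj_trivial, -inner_self_eq_norm_sq_to_K] <;> ring

lemma hasDerivAt_norm_comp (x : ℝ → E3) (x' : ℝ → E3) (t : ℝ) (hx : HasDerivAt x (x' t) t)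
    (h0 : x t ≠ 0) :
    HasDerivAt (fun s => ‖x s‖) ((inner ℝ (x t) (x' t) : ℝ) / ‖x t‖) t := by
  have hq : HasDerivAt (fun s => (inner ℝ (x s) (x s) : ℝ)) (2 * inner ℝ (x t) (x' t)) t := by
    have h2 := hx.inner ℝ hx
    rw [real_inner_comm (x t) (x' t), ← two_mul] at h2
    exact h2
  have hqpos : (0:ℝ) < inner ℝ (x t) (x t) := by
    rw [real_inner_self_eq_norm_sq]; exact pow_pos (norm_pos_iff.2 h0) 2
  have hs := (Real.hasDerivAt_sqrt hqpos.ne').comp t hq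
  simp only [Function.comp_def] at hs
  have hnorm : (fun s => Real.sqrt (inner ℝ (x s) (x s) : ℝ)) = fun s => ‖x s‖ := by
    funext s
    rw [real_inner_self_eq_norm_sq, Real.sqrt_sq (norm_nonneg _)]
  rw [hnorm] at hs
  refine hs.congr_deriv ?_
  rw [real_inner_self_eq_norm_sq, Real.sqrt_sq (norm_nonneg _)]
  have : ‖x t‖ ≠ 0 := norm_ne_zero_iff.2 h0
  field_simp

lemma cross3_zero_right (a : E3) : cross3 a 0 = 0 := by
  simp [cross3]

/-- For the Kepler equation `m̃·ẍ = -(C̃/|x|³)·x` with `x` nowhere zero, the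
Laplace–Runge–Lenz vector `A = m̃·ẋ × L - m̃·C̃·x/|x|`, with `L = m̃·(x × ẋ)`,
is constant in time. -/
theorem stmt_7 (m C : ℝ) (hm : 0 < m)
    (x x' x'' : ℝ → EuclideanSpace ℝ (Fin 3))
    (hx : ∀ t, HasDerivAt x (x' t) t)
    (hx' : ∀ t, HasDerivAt x' (x'' t) t)
    (hx0 : ∀ t, x t ≠ 0)
    (heq : ∀ t, m • x'' t = -(C / ‖x t‖ ^ 3) • x t)
    (L A : ℝ → EuclideanSpace ℝ (Fin 3))
    (hL : ∀ t, L t = m • cross3 (x t) (x' t))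
    (hA : ∀ t, A t = m • cross3 (x' t) (L t) - (m * C / ‖x t‖) • x t) :
    ∀ t s : ℝ, A t = A s := by
  have key : ∀ t, HasDerivAt A 0 t := by
    intro t
    have hrpos : (0:ℝ) < ‖x t‖ := norm_pos_iff.2 (hx0 t)
    set r : ℝ := ‖x t‖ with hr_def
    set d : ℝ := inner ℝ (x t) (x' t) with hd_def
    set k : ℝ := -(C / r ^ 3) / m with hk_def
    have hk : x'' t = k • x t := by
      have h1 : x'' t = m⁻¹ • (m • x'' t) := by
        rw [smul_smul, inv_mul_cancel₀ hm.ne', one_smul]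
      rw [h1, heq t, smul_smul, hk_def]
      congr 1
      rw [hr_def]
      field_simp
    have hnorm : HasDerivAt (fun s => ‖x s‖) (d / r) t :=
      hasDerivAt_norm_comp x x' t (hx t) (hx0 t)
    have hin : HasDerivAt (fun s => cross3 (x s) (x' s))
        (cross3 (x' t) (x' t) + cross3 (x t) (x'' t)) t := (hx t).cross (hx' t)
    have hout : HasDerivAt (fun s => cross3 (x' s) (m • cross3 (x s) (x' s)))
        (cross3 (x'' t) (m • cross3 (x t) (x' t)) +
          cross3 (x' t) (m • (cross3 (x' t) (x' t) + cross3 (x t) (x'' t)))) t :=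
      (hx' t).cross (hin.const_smul m)
    have h1 := hout.const_smul m
    have hc : HasDerivAt (fun s => m * C / ‖x s‖) ((m*C) * (-(d/r) / r^2)) t := by
      have := (hnorm.inv hrpos.ne').const_mul (m*C)
      simpa [div_eq_mul_inv] using this
    have h2 := hc.smul (hx t)
    have hAfun : A = fun s => m • cross3 (x' s) (m • cross3 (x s) (x' s))
        - (m * C / ‖x s‖) • x s := by
      funext s
      rw [hA s, hL s]
    have hD := h1.sub h2
    rw [hAfun]
    have hccs : cross3 (x t) (cross3 (x t) (x' t)) = d • x t - r^2 • x' t := by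
      rw [cross_cross_self, real_inner_self_eq_norm_sq, ← hd_def, ← hr_def]
    have hzero : m • (cross3 (x'' t) (m • cross3 (x t) (x' t)) +
          cross3 (x' t) (m • (cross3 (x' t) (x' t) + cross3 (x t) (x'' t)))) -
        ((m * C / ‖x t‖) • x' t + ((m*C) * (-(d/r) / r^2)) • x t) = 0 := by
      simp only [hk, cross3_smul_right, cross3_smul_left, cross3_self, smul_zero, zero_add,
        add_zero, cross3_zero_right, hccs]
      rw [hk_def, ← hr_def]
      match_scalars <;> field_simp <;> ring
    rw [hzero] at hD
    exact hD
  intro t s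
  exact is_const_of_deriv_eq_zero (fun u => (key u).differentiableAt)
    (fun u => (key u).deriv) t s
end
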